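/- arXiv:2007.12156 — 2 statements merged into one kernel-verified Lean document; each statement's English description precedes it below -/
import Mathlib

section
/- For every α in the Artin monoid A⁺ and all subsets T₁, T₂ ⊆ S, the monoid coset [α]_{T₁} is contained in [α]_{T₂} if and only if T₁ ⊆ T₂. -/
/-! Common setup for Artin monoids/groups. -/

section ArtinSetup

/-- The alternating word `s t s t ⋯` of a given length, in the free monoid. -/
def altWord {X : Type*} : X → X → ℕ → FreeMonoid X
  | _, _, 0 => 1
  | s, t, n + 1 => FreeMonoid.of s * altWord t s n

variable {S : Type} [Fintype S] (m : S → S → ℕ∞)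

/-- The braid relations: for `s ≠ t` with `m s t = n < ∞`, the two alternating words
of length `n` are related. -/
def braidRel : FreeMonoid S → FreeMonoid S → Prop := fun a b =>
  ∃ s t : S, ∃ n : ℕ, s ≠ t ∧ m s t = (n : ℕ∞) ∧ a = altWord s t n ∧ b = altWord t s n

/-- The congruence on the free monoid generated by the braid relations. -/
def artinCon : Con (FreeMonoid S) := conGen (braidRel m)

/-- The Artin monoid `A⁺` associated to the labels `m`. -/
abbrev ArtinMonoid := (artinCon m).Quotient

/-- The image of a standard generator `s ∈ S` in the Artin monoid. -/
def agen (s : S) : ArtinMonoid m := (artinCon m).mk' (FreeMonoid.of s)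

/-- The submonoid `A_T⁺` generated by a subset `T ⊆ S`. -/
def subMon (T : Set S) : Submonoid (ArtinMonoid m) :=
  Submonoid.closure (agen m '' T)

/-- The relation `α ∼_T β`: `α·t = β·t′` for some `t, t′ ∈ A_T⁺`. -/
def simRel (T : Set S) (a b : ArtinMonoid m) : Prop :=
  ∃ t ∈ subMon m T, ∃ t' ∈ subMon m T, a * t = b * t'

/-- The relation `α ≈_T β`: the transitive closure of `∼_T`. -/
def cosetRel (T : Set S) : ArtinMonoid m → ArtinMonoid m → Prop :=
  Relation.TransGen (simRel m T)

/-- The monoid coset `[α]_T`: the `≈_T`-equivalence class of `α`. -/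
def mcoset (T : Set S) (α : ArtinMonoid m) : Set (ArtinMonoid m) :=
  {β | cosetRel m T α β}

/-- The canonical monoid homomorphism from the free monoid to the free group. -/
def fmToFg {X : Type*} : FreeMonoid X →* FreeGroup X := FreeMonoid.lift FreeGroup.of

/-- The relators of the Artin group presentation. -/
def artinGroupRels : Set (FreeGroup S) :=
  {x | ∃ s t : S, ∃ n : ℕ, s ≠ t ∧ m s t = (n : ℕ∞) ∧
      x = (fmToFg (altWord s t n))⁻¹ * fmToFg (altWord t s n)}

/-- The Artin group `A` associated to the labels `m`. -/
abbrev ArtinGroup := PresentedGroup (artinGroupRels m)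

/-- The canonical homomorphism `π : A⁺ → A`. -/
def artinPi : ArtinMonoid m →* ArtinGroup m :=
  Con.lift _ ((PresentedGroup.mk (artinGroupRels m)).comp fmToFg)
    (Con.conGen_le.mpr (fun a b hab => by
      obtain ⟨s, t, n, hst, hmn, ha, hb⟩ := hab
      subst ha; subst hb
      have : ((fmToFg (altWord s t n))⁻¹ * fmToFg (altWord t s n) :
          FreeGroup S) ∈ Subgroup.normalClosure (artinGroupRels m) :=
        Subgroup.subset_normalClosure ⟨s, t, n, hst, hmn, rfl⟩
      simp only [Con.ker_rel, MonoidHom.comp_apply]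
      exact (QuotientGroup.eq (s := Subgroup.normalClosure (artinGroupRels m))).mpr this))

/-- The subgroup `A_T` of the Artin group generated by the images of `T ⊆ S`. -/
def subGrp (T : Set S) : Subgroup (ArtinGroup m) :=
  Subgroup.closure ((PresentedGroup.of (rels := artinGroupRels m)) '' T)

/-- The relators of the Coxeter group presentation on generators `T ⊆ S`:
the squares of the generators, together with the braid relators. -/
def coxRels (T : Set S) : Set (FreeGroup T) :=
  {x | ∃ s : T, x = FreeGroup.of s * FreeGroup.of s} ∪
  {x | ∃ s t : T, ∃ n : ℕ, (s : S) ≠ (t : S) ∧ m s t = (n : ℕ∞) ∧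
      x = (fmToFg (altWord s t n))⁻¹ * fmToFg (altWord t s n)}

/-- `T ⊆ S` is of finite type if the Coxeter group `W_T` is finite. -/
def FiniteType (T : Set S) : Prop := Finite (PresentedGroup (coxRels m T))

end ArtinSetup

section AltProd

/-- Alternating product `a b a b ⋯` of given length in a monoid. -/
def altP {G : Type*} [Monoid G] : G → G → ℕ → G
  | _, _, 0 => 1
  | a, b, n + 1 => a * altP b a n

theorem altP_map {G H : Type*} [Monoid G] [Monoid H] (φ : G →* H) (a b : G) :
    ∀ n, φ (altP a b n) = altP (φ a) (φ b) n := by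
  intro n
  induction n generalizing a b with
  | zero => simp [altP]
  | succ n ih => simp [altP, ih]

theorem altWord_lift {X : Type*} {H : Type*} [Monoid H] (f : X → H) (s t : X) :
    ∀ n, FreeMonoid.lift f (altWord s t n) = altP (f s) (f t) n := by
  intro n
  induction n generalizing s t with
  | zero => simp [altWord, altP]
  | succ n ih => simp [altWord, altP, ih]

theorem pow_succ_sandwich {G : Type*} [Group G] (a b : G) :
    ∀ n : ℕ, (a * b) ^ (n + 1) = a * (b * a) ^ n * b := by
  intro n
  induction n with
  | zero => simp
  | succ n ih =>
    rw [pow_succ, ih, pow_succ]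
    group

theorem altP_mul_inv {G : Type*} [Group G] :
    ∀ (n : ℕ) (a b : G), a * a = 1 → b * b = 1 →
      altP a b n * (altP b a n)⁻¹ = (a * b) ^ n := by
  intro n
  induction n with
  | zero => simp [altP]
  | succ n ih =>
    intro a b ha hb
    have hbinv : b⁻¹ = b := inv_eq_of_mul_eq_one_right hb
    rw [altP, altP, mul_inv_rev, show a * altP b a n * ((altP a b n)⁻¹ * b⁻¹)
        = a * (altP b a n * (altP a b n)⁻¹) * b⁻¹ by group,
      ih b a hb ha, hbinv, pow_succ_sandwich]

theorem altP_eq {G : Type*} [Group G] (a b : G) (ha : a * a = 1) (hb : b * b = 1)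
    (n : ℕ) (h : (a * b) ^ n = 1) : altP a b n = altP b a n := by
  have := altP_mul_inv n a b ha hb
  rw [h] at this
  exact mul_inv_eq_one.mp this

end AltProd

section Refl

open scoped Classical

variable {S : Type} [Fintype S] (m : S → S → ℕ∞)

/-- Coefficients of the Coxeter bilinear form. -/
noncomputable def kap (s t : S) : ℝ :=
  if s = t then 1 else -Real.cos (Real.pi / ((m s t).toNat : ℝ))

/-- The linear functional `v ↦ B(e_s, v)`. -/
noncomputable def bform (s : S) : (S → ℝ) →ₗ[ℝ] ℝ where
  toFun v := ∑ t, kap m s t * v t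
  map_add' v w := by simp [mul_add, Finset.sum_add_distrib]
  map_smul' c v := by simp [Finset.mul_sum]; ring_nf; simp [mul_assoc, mul_comm, mul_left_comm]

theorem bform_single (s t : S) : bform m s (Pi.single t 1) = kap m s t := by
  simp only [bform, LinearMap.coe_mk, AddHom.coe_mk]
  rw [Finset.sum_eq_single t]
  · simp
  · intro u _ hu; simp [Pi.single_apply, hu]
  · simp

/-- The reflection associated to `s`, as a linear endomorphism. -/
noncomputable def reflE (s : S) : Module.End ℝ (S → ℝ) :=
  LinearMap.id - (bform m s).smulRight ((2 : ℝ) • (Pi.single s 1 : S → ℝ))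

theorem reflE_apply (s : S) (v : S → ℝ) :
    reflE m s v = v - (2 * bform m s v) • (Pi.single s 1 : S → ℝ) := by
  simp [reflE, LinearMap.smulRight_apply, smul_smul, mul_comm]

theorem bform_reflE (s : S) (v : S → ℝ) :
    bform m s (reflE m s v) = - bform m s v := by
  rw [reflE_apply, map_sub, map_smul, bform_single]
  simp [kap]; ring

theorem reflE_invol (s : S) : reflE m s * reflE m s = 1 := by
  refine LinearMap.ext fun v => ?_
  rw [Module.End.mul_apply, reflE_apply, reflE_apply m s v, map_sub, map_smul, bform_single]
  simp only [kap, if_pos rfl, smul_eq_mul, mul_one]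
  ext u
  simp [Pi.single_apply]
  split <;> ring

end Refl

section Trig

open Real

theorem trig1 (θ x : ℝ) :
    (4 * cos θ ^ 2 - 1) * sin (x + θ) - 2 * cos θ * sin x = sin (x + 3 * θ) := by
  rw [sin_add x (3 * θ), sin_three_mul, cos_three_mul, sin_add x θ]
  linear_combination (4 * Real.sin θ * Real.cos x) * (Real.sin_sq_add_cos_sq θ)

theorem trig2 (θ x : ℝ) :
    2 * cos θ * sin (x + θ) - sin x = sin (x + 2 * θ) := by
  rw [sin_add x (2 * θ), sin_add x θ, cos_two_mul, sin_two_mul]; ring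

theorem trig3 (θ x : ℝ) :
    (4 * cos θ ^ 2 - 1) * sin x - 2 * cos θ * sin (x - θ) = sin (x + 2 * θ) := by
  rw [sin_add x (2 * θ), sin_sub x θ, cos_two_mul, sin_two_mul]; ring

theorem trig4 (θ x : ℝ) :
    2 * cos θ * sin x - sin (x - θ) = sin (x + θ) := by
  rw [sin_add x θ, sin_sub x θ]; ring

end Trig

section Core

open scoped Classical

variable {S : Type} [Fintype S] (m : S → S → ℕ∞)

theorem kap_self (s : S) : kap m s s = 1 := by simp [kap]

theorem reflE_es (s : S) :
    reflE m s (Pi.single s 1) = -(Pi.single s 1 : S → ℝ) := by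
  rw [reflE_apply, bform_single, kap_self]
  ext u; simp [Pi.single_apply]; split <;> ring

theorem reflE_other {s t : S} {c : ℝ} (hc : kap m s t = c) :
    reflE m s (Pi.single t 1) =
      (Pi.single t 1 : S → ℝ) - (2 * c) • (Pi.single s 1 : S → ℝ) := by
  rw [reflE_apply, bform_single, hc]

theorem R_es {s t : S} {c : ℝ} (hcs : kap m s t = c) (hct : kap m t s = c) :
    (reflE m s * reflE m t) (Pi.single s 1) =
      (4 * c ^ 2 - 1) • (Pi.single s 1 : S → ℝ) + (-(2 * c)) • (Pi.single t 1 : S → ℝ) := by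
  rw [Module.End.mul_apply, reflE_other m hct, map_sub, map_smul, reflE_es,
    reflE_other m hcs]
  ext u; simp [Pi.single_apply]; split <;> split <;> ring

theorem R_et {s t : S} {c : ℝ} (hcs : kap m s t = c) :
    (reflE m s * reflE m t) (Pi.single t 1) =
      (2 * c) • (Pi.single s 1 : S → ℝ) + (-1 : ℝ) • (Pi.single t 1 : S → ℝ) := by
  rw [Module.End.mul_apply, reflE_es, map_neg, reflE_other m hcs]
  ext u; simp [Pi.single_apply]; split <;> split <;> ring

theorem Rpow_plane {s t : S} {c θ : ℝ} (hcs : kap m s t = c) (hct : kap m t s = c)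
    (hc : c = -Real.cos θ) (k : ℕ) :
    (Real.sin θ • (((reflE m s * reflE m t) ^ k) (Pi.single s 1)) =
      Real.sin ((2 * k + 1) * θ) • (Pi.single s 1 : S → ℝ) +
        Real.sin ((2 * k) * θ) • (Pi.single t 1 : S → ℝ)) ∧
    (Real.sin θ • (((reflE m s * reflE m t) ^ k) (Pi.single t 1)) =
      (-Real.sin ((2 * k) * θ)) • (Pi.single s 1 : S → ℝ) +
        (-Real.sin ((2 * k - 1) * θ)) • (Pi.single t 1 : S → ℝ)) := by
  induction k with
  | zero =>
    constructor
    · norm_num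
    · norm_num [show (2 * ((0:ℕ):ℝ) - 1) * θ = -θ by push_cast; ring, Real.sin_neg]
  | succ k ih =>
    obtain ⟨ih1, ih2⟩ := ih
    have key : ∀ A B : ℝ,
        (reflE m s * reflE m t) (A • (Pi.single s 1 : S → ℝ) + B • (Pi.single t 1 : S → ℝ)) =
          (A * (4 * c ^ 2 - 1) + B * (2 * c)) • (Pi.single s 1 : S → ℝ) +
            (A * (-(2 * c)) + B * (-1)) • (Pi.single t 1 : S → ℝ) := by
      intro A B
      rw [map_add, map_smul, map_smul, R_es m hcs hct, R_et m hcs]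
      ext u; simp [Pi.single_apply]; split <;> split <;> ring
    have hpow : ∀ v : S → ℝ, ((reflE m s * reflE m t) ^ (k + 1)) v =
        (reflE m s * reflE m t) (((reflE m s * reflE m t) ^ k) v) := by
      intro v; rw [pow_succ']; rfl
    constructor
    · rw [hpow, ← map_smul, ih1, key]
      have h1 : Real.sin ((2 * k + 1) * θ) * (4 * c ^ 2 - 1) +
          Real.sin ((2 * k) * θ) * (2 * c) = Real.sin ((2 * (k + 1) + 1) * θ) := by
        rw [hc, show ((2 * ((k : ℝ) + 1) + 1) * θ) = (2 * k) * θ + 3 * θ by ring,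
          ← trig1 θ ((2 * k) * θ), show ((2 * (k : ℝ) + 1) * θ) = (2 * k) * θ + θ by ring]
        ring
      have h2 : Real.sin ((2 * k + 1) * θ) * (-(2 * c)) +
          Real.sin ((2 * k) * θ) * (-1) = Real.sin ((2 * (k + 1)) * θ) := by
        rw [hc, show ((2 * ((k : ℝ) + 1)) * θ) = (2 * k) * θ + 2 * θ by ring,
          ← trig2 θ ((2 * k) * θ), show ((2 * (k : ℝ) + 1) * θ) = (2 * k) * θ + θ by ring]
        ring
      push_cast
      push_cast at h1 h2
      rw [h1, h2]
    · rw [hpow, ← map_smul, ih2, key]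
      have h1 : (-Real.sin ((2 * k) * θ)) * (4 * c ^ 2 - 1) +
          (-Real.sin ((2 * k - 1) * θ)) * (2 * c) = -Real.sin ((2 * (k + 1)) * θ) := by
        rw [hc, show ((2 * ((k : ℝ) + 1)) * θ) = (2 * k) * θ + 2 * θ by ring,
          ← trig3 θ ((2 * k) * θ), show ((2 * (k : ℝ) - 1) * θ) = (2 * k) * θ - θ by ring]
        ring
      have h2 : (-Real.sin ((2 * k) * θ)) * (-(2 * c)) +
          (-Real.sin ((2 * k - 1) * θ)) * (-1) = -Real.sin ((2 * (k + 1) - 1) * θ) := by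
        rw [hc, show ((2 * ((k : ℝ) + 1) - 1) * θ) = (2 * k) * θ + θ by ring,
          ← trig4 θ ((2 * k) * θ), show ((2 * (k : ℝ) - 1) * θ) = (2 * k) * θ - θ by ring]
        ring
      push_cast
      push_cast at h1 h2
      rw [h1, h2]

end Core


theorem pow_fix {R M : Type*} [Semiring R] [AddCommMonoid M] [Module R M]
    (f : Module.End R M) {w : M} (h : f w = w) : ∀ k : ℕ, (f ^ k) w = w := by
  intro k
  induction k with
  | zero => simp
  | succ k ih => rw [pow_succ, Module.End.mul_apply, h, ih]

section Core2

open scoped Classical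

variable {S : Type} [Fintype S] (m : S → S → ℕ∞)

theorem R_pow_n {s t : S} (hst : s ≠ t) {n : ℕ} (hn : 2 ≤ n)
    (hm : m s t = (n : ℕ∞)) (hm' : m t s = (n : ℕ∞)) :
    (reflE m s * reflE m t) ^ n = 1 := by
  set θ : ℝ := Real.pi / n with hθ
  set c : ℝ := -Real.cos θ with hcdef
  have hn0 : (0 : ℝ) < n := by positivity
  have hn2 : (2 : ℝ) ≤ n := by exact_mod_cast hn
  have hcs : kap m s t = c := by
    simp [kap, hst, hm, ENat.toNat_coe, hθ, hcdef]
  have hct : kap m t s = c := by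
    simp [kap, hst.symm, hm', ENat.toNat_coe, hθ, hcdef]
  have hθpos : 0 < θ := by positivity
  have hθlt : θ < Real.pi := by
    rw [hθ, div_lt_iff₀ hn0]
    have h2 : Real.pi * 2 ≤ Real.pi * n :=
      mul_le_mul_of_nonneg_left hn2 (le_of_lt Real.pi_pos)
    linarith [Real.pi_pos]
  have hsin : Real.sin θ ≠ 0 := ne_of_gt (Real.sin_pos_of_pos_of_lt_pi hθpos hθlt)
  have hnθ : (n : ℝ) * θ = Real.pi := by
    rw [hθ]; field_simp
  have h2n : Real.sin ((2 * (n:ℝ)) * θ) = 0 := by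
    rw [show (2 * (n:ℝ)) * θ = 2 * ((n:ℝ) * θ) by ring, hnθ, Real.sin_two_pi]
  have h2n1 : Real.sin ((2 * (n:ℝ) + 1) * θ) = Real.sin θ := by
    rw [show (2 * (n:ℝ) + 1) * θ = θ + 2 * ((n:ℝ) * θ) by ring, hnθ, Real.sin_add_two_pi]
  have h2n1' : Real.sin ((2 * (n:ℝ) - 1) * θ) = -Real.sin θ := by
    rw [show (2 * (n:ℝ) - 1) * θ = -θ + 2 * ((n:ℝ) * θ) by ring, hnθ,
      Real.sin_add_two_pi, Real.sin_neg]
  obtain ⟨hes, het⟩ := Rpow_plane m hcs hct hcdef n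
  have hRes : ((reflE m s * reflE m t) ^ n) (Pi.single s 1) = (Pi.single s 1 : S → ℝ) := by
    apply smul_right_injective (S → ℝ) hsin
    show Real.sin θ • _ = Real.sin θ • _
    rw [hes, h2n, h2n1]
    ext u; simp
  have hRet : ((reflE m s * reflE m t) ^ n) (Pi.single t 1) = (Pi.single t 1 : S → ℝ) := by
    apply smul_right_injective (S → ℝ) hsin
    show Real.sin θ • _ = Real.sin θ • _
    rw [het, h2n, h2n1']
    ext u; simp
  have hfix : ∀ w : S → ℝ, bform m s w = 0 → bform m t w = 0 →
      ((reflE m s * reflE m t) ^ n) w = w := by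
    intro w h1 h2
    have ht' : reflE m t w = w := by rw [reflE_apply, h2]; simp
    have hR : (reflE m s * reflE m t) w = w := by
      rw [Module.End.mul_apply, ht', reflE_apply, h1]; simp
    exact pow_fix _ hR n
  refine LinearMap.ext fun v => ?_
  have hd : Real.sin θ ^ 2 = 1 - c ^ 2 := by
    have := Real.sin_sq_add_cos_sq θ
    rw [hcdef]; nlinarith
  have hd0 : Real.sin θ ^ 2 ≠ 0 := pow_ne_zero 2 hsin
  set d : ℝ := Real.sin θ ^ 2 with hddef
  set a : ℝ := bform m s v with ha
  set b : ℝ := bform m t v with hb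
  set x : ℝ := (a - c * b) / d with hx
  set y : ℝ := (b - c * a) / d with hy
  set w : S → ℝ := v - x • (Pi.single s 1 : S → ℝ) - y • (Pi.single t 1 : S → ℝ) with hw
  have hcc : c ^ 2 = 1 - d := by rw [hd]; ring
  have hws : bform m s w = 0 := by
    rw [hw, map_sub, map_sub, map_smul, map_smul, bform_single, bform_single,
      kap_self, hcs, hx, hy, ← ha]
    field_simp
    have hY : Real.sin θ ^ 2 * (Real.sin θ)⁻¹ ^ 2 = 1 := by rw [← mul_pow, mul_inv_cancel₀ hsin, one_pow]
    linear_combination (a * (Real.sin θ)⁻¹ ^ 2) * Real.sin_sq_add_cos_sq θ - a * hY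
  have hwt : bform m t w = 0 := by
    rw [hw, map_sub, map_sub, map_smul, map_smul, bform_single, bform_single,
      kap_self, hct, hx, hy, ← hb]
    field_simp
    have hY : Real.sin θ ^ 2 * (Real.sin θ)⁻¹ ^ 2 = 1 := by rw [← mul_pow, mul_inv_cancel₀ hsin, one_pow]
    linear_combination (b * (Real.sin θ)⁻¹ ^ 2) * Real.sin_sq_add_cos_sq θ - b * hY
  have hv : v = x • (Pi.single s 1 : S → ℝ) + y • (Pi.single t 1 : S → ℝ) + w := by
    rw [hw]; ext u; simp
  rw [Module.End.one_apply, hv, map_add, map_add, map_smul, map_smul, hRes, hRet,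
    hfix w hws hwt]

end Core2


section Glue

open scoped Classical

variable {S : Type} [Fintype S] (m : S → S → ℕ∞)

/-- The reflection as a unit of the endomorphism monoid. -/
noncomputable def reflU (s : S) : (Module.End ℝ (S → ℝ))ˣ :=
  ⟨reflE m s, reflE m s, reflE_invol m s, reflE_invol m s⟩

theorem reflU_braid (hsymm : ∀ s t : S, m s t = m t s)
    (hge : ∀ s t : S, s ≠ t → 2 ≤ m s t) {s t : S} (hst : s ≠ t) {n : ℕ}
    (hmn : m s t = (n : ℕ∞)) :
    altP (reflU m s) (reflU m t) n = altP (reflU m t) (reflU m s) n := by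
  have hn : 2 ≤ n := by
    have := hge s t hst
    rw [hmn] at this
    exact_mod_cast this
  have hm' : m t s = (n : ℕ∞) := by rw [← hsymm, hmn]
  apply altP_eq
  · exact Units.ext (reflE_invol m s)
  · exact Units.ext (reflE_invol m t)
  · apply Units.ext
    show ((reflU m s * reflU m t) ^ n : (Module.End ℝ (S → ℝ))ˣ).val = 1
    rw [Units.val_pow_eq_pow_val, Units.val_mul]
    exact R_pow_n m hst hn hmn hm'

/-- The reflection representation of the Artin monoid. -/
noncomputable def Phi (hsymm : ∀ s t : S, m s t = m t s)
    (hge : ∀ s t : S, s ≠ t → 2 ≤ m s t) :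
    ArtinMonoid m →* (Module.End ℝ (S → ℝ))ˣ :=
  Con.lift _ (FreeMonoid.lift (fun s => reflU m s)) (Con.conGen_le.mpr (fun a b hab => by
    obtain ⟨s, t, n, hst, hmn, ha, hb⟩ := hab
    subst ha; subst hb
    show Con.ker _ _ _
    rw [Con.ker_rel, altWord_lift, altWord_lift]
    exact reflU_braid m hsymm hge hst hmn))

theorem Phi_agen (hsymm : ∀ s t : S, m s t = m t s)
    (hge : ∀ s t : S, s ≠ t → 2 ≤ m s t) (s : S) :
    Phi m hsymm hge (agen m s) = reflU m s := by
  rw [agen, Phi]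
  exact FreeMonoid.lift_eval_of (fun s => reflU m s) s

/-- The subgroup of units fixing the `s`-coordinate. -/
noncomputable def Qsub (s : S) : Subgroup (Module.End ℝ (S → ℝ))ˣ where
  carrier := {g | ∀ v : S → ℝ, ((g : Module.End ℝ (S → ℝ)) v) s = v s}
  one_mem' := by intro v; simp
  mul_mem' := by
    intro a b ha hb v
    rw [Units.val_mul, Module.End.mul_apply, ha, hb]
  inv_mem' := by
    intro g hg v
    have h1 : (g : Module.End ℝ (S → ℝ)) (((g⁻¹ : _ˣ) : Module.End ℝ (S → ℝ)) v) = v := by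
      rw [← Module.End.mul_apply, ← Units.val_mul, mul_inv_cancel, Units.val_one,
        Module.End.one_apply]
    have := hg (((g⁻¹ : _ˣ) : Module.End ℝ (S → ℝ)) v)
    rw [h1] at this
    exact this.symm

theorem mem_Qsub {s : S} {g : (Module.End ℝ (S → ℝ))ˣ} :
    g ∈ Qsub (S := S) s ↔ ∀ v : S → ℝ, ((g : Module.End ℝ (S → ℝ)) v) s = v s :=
  Iff.rfl

theorem Phi_subMon_mem (hsymm : ∀ s t : S, m s t = m t s)
    (hge : ∀ s t : S, s ≠ t → 2 ≤ m s t) {T : Set S} {s : S} (hs : s ∉ T)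
    {g : ArtinMonoid m} (hg : g ∈ subMon m T) :
    Phi m hsymm hge g ∈ Qsub s := by
  induction hg using Submonoid.closure_induction with
  | mem x hx =>
    obtain ⟨t, ht, rfl⟩ := hx
    have hts : t ≠ s := by rintro rfl; exact hs ht
    rw [Phi_agen, mem_Qsub]
    intro v
    show reflE m t v s = v s
    rw [reflE_apply]
    simp [Pi.single_apply, hts]
  | one => rw [map_one]; exact one_mem _
  | mul x y _ _ hx hy => rw [map_mul]; exact mul_mem hx hy

theorem simRel_Q (hsymm : ∀ s t : S, m s t = m t s)
    (hge : ∀ s t : S, s ≠ t → 2 ≤ m s t) {T : Set S} {s : S} (hs : s ∉ T)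
    {a b : ArtinMonoid m} (h : simRel m T a b) :
    (Phi m hsymm hge a)⁻¹ * Phi m hsymm hge b ∈ Qsub s := by
  obtain ⟨t, ht, t', ht', heq⟩ := h
  have e : Phi m hsymm hge a * Phi m hsymm hge t
      = Phi m hsymm hge b * Phi m hsymm hge t' := by
    rw [← map_mul, ← map_mul, heq]
  have e2 : (Phi m hsymm hge a)⁻¹ * Phi m hsymm hge b
      = Phi m hsymm hge t * (Phi m hsymm hge t')⁻¹ := by
    rw [inv_mul_eq_iff_eq_mul, ← mul_assoc, e, mul_assoc, mul_inv_cancel, mul_one]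
  rw [e2]
  exact mul_mem (Phi_subMon_mem m hsymm hge hs ht)
    (inv_mem (Phi_subMon_mem m hsymm hge hs ht'))

theorem cosetRel_Q (hsymm : ∀ s t : S, m s t = m t s)
    (hge : ∀ s t : S, s ≠ t → 2 ≤ m s t) {T : Set S} {s : S} (hs : s ∉ T)
    {a b : ArtinMonoid m} (h : cosetRel m T a b) :
    (Phi m hsymm hge a)⁻¹ * Phi m hsymm hge b ∈ Qsub s := by
  induction h with
  | single hrel => exact simRel_Q m hsymm hge hs hrel
  | tail _ hrel ih =>
    rename_i b c _
    have : (Phi m hsymm hge a)⁻¹ * Phi m hsymm hge c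
        = ((Phi m hsymm hge a)⁻¹ * Phi m hsymm hge b) *
          ((Phi m hsymm hge b)⁻¹ * Phi m hsymm hge c) := by group
    rw [this]
    exact mul_mem ih (simRel_Q m hsymm hge hs hrel)

theorem reflU_not_fix (s : S) : reflU m s ∉ Qsub s := by
  intro h
  have h4 := h (Pi.single s 1)
  rw [show ((reflU m s : (Module.End ℝ (S → ℝ))ˣ) : Module.End ℝ (S → ℝ))
      = reflE m s from rfl, reflE_es] at h4
  simp at h4
  linarith

end Glue

/-- `[α]_T₁ ⊆ [α]_T₂ ↔ T₁ ⊆ T₂`. -/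
theorem artin_coset_subset_iff {S : Type} [Fintype S] (m : S → S → ℕ∞)
    (hsymm : ∀ s t : S, m s t = m t s) (hge : ∀ s t : S, s ≠ t → 2 ≤ m s t)
    (α : ArtinMonoid m) (T₁ T₂ : Set S) :
    mcoset m T₁ α ⊆ mcoset m T₂ α ↔ T₁ ⊆ T₂ := by
  constructor
  · intro h s hs
    by_contra hsT
    have hmem : α * agen m s ∈ mcoset m T₁ α :=
      Relation.TransGen.single
        ⟨agen m s, Submonoid.subset_closure ⟨s, hs, rfl⟩, 1, one_mem _, (mul_one _).symm⟩
    have h2 : cosetRel m T₂ α (α * agen m s) := h hmem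
    have h3 := cosetRel_Q m hsymm hge hsT h2
    rw [map_mul, inv_mul_cancel_left, Phi_agen] at h3
    exact reflU_not_fix m s h3
  · intro hT β hβ
    refine Relation.TransGen.mono (fun a b hab => ?_) α β hβ
    obtain ⟨t, ht, t', ht', he⟩ := hab
    exact ⟨t, Submonoid.closure_mono (Set.image_mono hT) ht,
      t', Submonoid.closure_mono (Set.image_mono hT) ht', he⟩
end

section
/- Let γ be an element of the Artin monoid A⁺ and T₁, T₂ ⊆ S. For i = 1,2 suppose d_i ∈ A_{T_i}⁺ is a right divisor of γ such that every right divisor of γ lying in A_{T_i}⁺ right-divides d_i, and suppose g ∈ A⁺ is a common right divisor of d₁ and d₂ such that every common right divisor of d₁ and d₂ right-divides g. Then g lies in A_{T₁∩T₂}⁺, g right-divides γ, and every right divisor of γ lying in A_{T₁∩T₂}⁺ right-divides g. -/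
/-! Auxiliary material: the set of letters of a positive word is invariant under the
braid relations (each braid relation has length ≥ 2 and letter set `{s, t}` on both
sides), hence parabolic submonoids are closed under divisors. -/

section LettersAux

set_option linter.unusedSectionVars false

variable {S : Type} [Fintype S] (m : S → S → ℕ∞)

/-- The set of letters occurring in a word of the free monoid. -/
def letters (w : FreeMonoid S) : Set S := {s | s ∈ FreeMonoid.toList w}

lemma letters_one : letters (1 : FreeMonoid S) = ∅ := by ext s; simp [letters]

lemma letters_of (s : S) : letters (FreeMonoid.of s) = {s} := by ext x; simp [letters]

lemma letters_mul (a b : FreeMonoid S) : letters (a * b) = letters a ∪ letters b := by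
  ext s; simp [letters, FreeMonoid.toList_mul, List.mem_append]

lemma letters_altWord_subset : ∀ (n : ℕ) (s t : S), letters (altWord s t n) ⊆ {s, t}
  | 0, s, t => by simp [altWord, letters_one]
  | n + 1, s, t => by
    rw [altWord, letters_mul, letters_of]
    intro x hx
    rcases hx with h | h
    · exact Or.inl h
    · rcases letters_altWord_subset n t s h with h' | h'
      · exact Or.inr h'
      · exact Or.inl h'

lemma letters_altWord_two (n : ℕ) (s t : S) :
    letters (altWord s t (n + 2)) = {s, t} := by
  apply Set.Subset.antisymm (letters_altWord_subset _ s t)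
  show letters (FreeMonoid.of s * (FreeMonoid.of t * altWord s t n)) ⊇ _
  rw [letters_mul, letters_mul, letters_of, letters_of]
  intro x hx
  rcases hx with h | h
  · exact Or.inl h
  · exact Or.inr (Or.inl h)

/-- The congruence "same letter set" on the free monoid. -/
def lettersCon : Con (FreeMonoid S) where
  r a b := letters a = letters b
  iseqv := ⟨fun _ => rfl, Eq.symm, Eq.trans⟩
  mul' h₁ h₂ := by
    show letters _ = letters _
    rw [letters_mul, letters_mul]
    exact congrArg₂ (· ∪ ·) h₁ h₂

lemma artinCon_letters (hge : ∀ s t : S, s ≠ t → 2 ≤ m s t)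
    {a b : FreeMonoid S} (h : artinCon m a b) : letters a = letters b := by
  have hle : artinCon m ≤ lettersCon := Con.conGen_le.mpr (fun a b hab => ?_)
  · exact hle h
  obtain ⟨s, t, n, hst, hmn, ha, hb⟩ := hab
  have h2 : 2 ≤ n := by
    have := hge s t hst
    rw [hmn] at this
    exact_mod_cast this
  obtain ⟨k, rfl⟩ : ∃ k, n = k + 2 := ⟨n - 2, by omega⟩
  show letters a = letters b
  rw [ha, hb, letters_altWord_two, letters_altWord_two, Set.pair_comm]

/-- The letter set of an element of the Artin monoid. -/
def ALetters (hge : ∀ s t : S, s ≠ t → 2 ≤ m s t) (a : ArtinMonoid m) : Set S :=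
  Con.liftOn a letters (fun _ _ h => artinCon_letters m hge h)

variable (hge : ∀ s t : S, s ≠ t → 2 ≤ m s t)

lemma ALetters_mul (a b : ArtinMonoid m) :
    ALetters m hge (a * b) = ALetters m hge a ∪ ALetters m hge b := by
  refine Con.induction_on₂ a b (fun x y => ?_)
  exact letters_mul x y

lemma mem_subMon_iff (T : Set S) (a : ArtinMonoid m) :
    a ∈ subMon m T ↔ ALetters m hge a ⊆ T := by
  constructor
  · intro ha
    refine Submonoid.closure_induction (fun x hx => ?_) ?_ ?_ ha
    · obtain ⟨s, hs, rfl⟩ := hx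
      show ALetters m hge ((artinCon m).mk' (FreeMonoid.of s)) ⊆ T
      show letters (FreeMonoid.of s) ⊆ T
      rw [letters_of]
      simpa using hs
    · show letters (1 : FreeMonoid S) ⊆ T
      rw [letters_one]; exact Set.empty_subset T
    · intro x y _ _ hx hy
      rw [ALetters_mul]
      exact Set.union_subset hx hy
  · refine Con.induction_on a (fun w => ?_)
    intro hw
    replace hw : letters w ⊆ T := hw
    induction w using FreeMonoid.recOn with
    | one => exact Submonoid.one_mem _
    | of_mul x xs ih =>
      rw [letters_mul, letters_of, Set.union_subset_iff] at hw
      have hx : ((FreeMonoid.of x : FreeMonoid S) : ArtinMonoid m) * (xs : ArtinMonoid m)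
          ∈ subMon m T := by
        refine Submonoid.mul_mem _ ?_ (ih hw.2)
        exact Submonoid.subset_closure ⟨x, by simpa using hw.1, rfl⟩
      exact hx

lemma dvd_letters_subset {a g : ArtinMonoid m} (h : ∃ c, a = c * g) :
    ALetters m hge g ⊆ ALetters m hge a := by
  obtain ⟨c, rfl⟩ := h
  rw [ALetters_mul]
  exact Set.subset_union_right

end LettersAux

/-- if `d_i` is the greatest right divisor of `γ` lying in `A_(T_i)⁺` and `g` is
the greatest common right divisor of `d₁, d₂`, then `g ∈ A_(T₁∩T₂)⁺`, `g` right-divides `γ`,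
and `g` is the greatest right divisor of `γ` lying in `A_(T₁∩T₂)⁺`. -/
theorem artin_greatest_right_divisor_inter {S : Type} [Fintype S] (m : S → S → ℕ∞)
    (hsymm : ∀ s t : S, m s t = m t s) (hge : ∀ s t : S, s ≠ t → 2 ≤ m s t)
    (γ d₁ d₂ g : ArtinMonoid m) (T₁ T₂ : Set S)
    (hd₁mem : d₁ ∈ subMon m T₁) (hd₂mem : d₂ ∈ subMon m T₂)
    (hd₁dvd : ∃ c, γ = c * d₁) (hd₂dvd : ∃ c, γ = c * d₂)
    (hd₁max : ∀ x ∈ subMon m T₁, (∃ c, γ = c * x) → ∃ c, d₁ = c * x)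
    (hd₂max : ∀ x ∈ subMon m T₂, (∃ c, γ = c * x) → ∃ c, d₂ = c * x)
    (hg₁ : ∃ c, d₁ = c * g) (hg₂ : ∃ c, d₂ = c * g)
    (hgmax : ∀ x : ArtinMonoid m, (∃ c, d₁ = c * x) → (∃ c, d₂ = c * x) →
      ∃ c, g = c * x) :
    g ∈ subMon m (T₁ ∩ T₂) ∧ (∃ c, γ = c * g) ∧
      ∀ x ∈ subMon m (T₁ ∩ T₂), (∃ c, γ = c * x) → ∃ c, g = c * x := by
  have hgT₁ : ALetters m hge g ⊆ T₁ :=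
    (dvd_letters_subset m hge hg₁).trans ((mem_subMon_iff m hge T₁ d₁).mp hd₁mem)
  have hgT₂ : ALetters m hge g ⊆ T₂ :=
    (dvd_letters_subset m hge hg₂).trans ((mem_subMon_iff m hge T₂ d₂).mp hd₂mem)
  refine ⟨(mem_subMon_iff m hge _ g).mpr (Set.subset_inter hgT₁ hgT₂), ?_, ?_⟩
  · obtain ⟨c, rfl⟩ := hg₁
    obtain ⟨c', hc'⟩ := hd₁dvd
    exact ⟨c' * c, by rw [hc', mul_assoc]⟩
  · intro x hx hxγ
    have hx1 : x ∈ subMon m T₁ :=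
      (mem_subMon_iff m hge T₁ x).mpr (((mem_subMon_iff m hge _ x).mp hx).trans
        Set.inter_subset_left)
    have hx2 : x ∈ subMon m T₂ :=
      (mem_subMon_iff m hge T₂ x).mpr (((mem_subMon_iff m hge _ x).mp hx).trans
        Set.inter_subset_right)
    exact hgmax x (hd₁max x hx1 hxγ) (hd₂max x hx2 hxγ)
end
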